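/- arXiv:1605.07573 — 3 statements merged into one kernel-verified Lean document; each statement's English description precedes it below -/
import Mathlib

section
/- Let D = {(u,v) ∈ ℝ² : 1 < cosh u < √2}, and define x : D → ℝ³ by x(u,v) = (cosh u · cosh v, cosh u · sinh v, F(u)) where F(u) = ∫₀ᵘ √(2 − cosh² t) dt. Then for all (u,v) ∈ D the partial derivatives satisfy B(∂_u x, ∂_u x) = −1, B(∂_u x, ∂_v x) = 0, and B(∂_v x, ∂_v x) = cosh² u, where B is the index-2 bilinear form B(x,y) = −x₁y₁ + x₂y₂ − x₃y₃ on ℝ³. Thus x is an isometric immersion into ℝ³₂ of the constant curvature K = 1 metric ds² = −du² + cosh²u dv². -/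
/-- The index-2 bilinear form `B(x,y) = −x₁y₁ + x₂y₂ − x₃y₃` on `ℝ³`. -/
def formR32 (x y : ℝ × ℝ × ℝ) : ℝ :=
  -(x.1 * y.1) + x.2.1 * y.2.1 - x.2.2 * y.2.2

/-- The parametrization `x(u,v) = (cosh u cosh v, cosh u sinh v, ∫₀ᵘ √(2 − cosh²t) dt)`. -/
noncomputable def xKoneR32 : ℝ × ℝ → ℝ × ℝ × ℝ := fun p =>
  (Real.cosh p.1 * Real.cosh p.2, Real.cosh p.1 * Real.sinh p.2,
    ∫ t in (0 : ℝ)..p.1, Real.sqrt (2 - Real.cosh t ^ 2))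

lemma deriv_u (u v : ℝ) :
    deriv (fun t => xKoneR32 (t, v)) u =
      (Real.sinh u * Real.cosh v, Real.sinh u * Real.sinh v,
        Real.sqrt (2 - Real.cosh u ^ 2)) := by
  have hcont : Continuous fun t : ℝ => Real.sqrt (2 - Real.cosh t ^ 2) := by
    continuity
  have h3 : HasDerivAt (fun t : ℝ => ∫ s in (0:ℝ)..t, Real.sqrt (2 - Real.cosh s ^ 2))
      (Real.sqrt (2 - Real.cosh u ^ 2)) u :=
    intervalIntegral.integral_hasDerivAt_right (hcont.intervalIntegrable 0 u)
      (hcont.stronglyMeasurableAtFilter _ _) hcont.continuousAt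
  have h1 : HasDerivAt (fun t : ℝ => Real.cosh t * Real.cosh v)
      (Real.sinh u * Real.cosh v) u := (Real.hasDerivAt_cosh u).mul_const _
  have h2 : HasDerivAt (fun t : ℝ => Real.cosh t * Real.sinh v)
      (Real.sinh u * Real.sinh v) u := (Real.hasDerivAt_cosh u).mul_const _
  exact (HasDerivAt.prodMk h1 (HasDerivAt.prodMk h2 h3)).deriv

lemma deriv_v (u v : ℝ) :
    deriv (fun t => xKoneR32 (u, t)) v =
      (Real.cosh u * Real.sinh v, Real.cosh u * Real.cosh v, 0) := by
  have h1 : HasDerivAt (fun t : ℝ => Real.cosh u * Real.cosh t)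
      (Real.cosh u * Real.sinh v) v := (Real.hasDerivAt_cosh v).const_mul _
  have h2 : HasDerivAt (fun t : ℝ => Real.cosh u * Real.sinh t)
      (Real.cosh u * Real.cosh v) v := (Real.hasDerivAt_sinh v).const_mul _
  have h3 : HasDerivAt (fun _ : ℝ => ∫ s in (0:ℝ)..u, Real.sqrt (2 - Real.cosh s ^ 2))
      0 v := hasDerivAt_const _ _
  exact (HasDerivAt.prodMk h1 (HasDerivAt.prodMk h2 h3)).deriv

/-- On `D = {(u,v) : 1 < cosh u < √2}` the map `xKoneR32` is an isometric immersion
into `ℝ³₂` of the metric `ds² = −du² + cosh²u dv²` (K = 1). -/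
theorem Kone_immersion_R32 (u v : ℝ)
    (hu₁ : 1 < Real.cosh u) (hu₂ : Real.cosh u < Real.sqrt 2) :
    formR32 (deriv (fun t => xKoneR32 (t, v)) u) (deriv (fun t => xKoneR32 (t, v)) u) = -1 ∧
    formR32 (deriv (fun t => xKoneR32 (t, v)) u) (deriv (fun t => xKoneR32 (u, t)) v) = 0 ∧
    formR32 (deriv (fun t => xKoneR32 (u, t)) v) (deriv (fun t => xKoneR32 (u, t)) v)
      = Real.cosh u ^ 2 := by
  rw [deriv_u, deriv_v]
  have hpos : 0 ≤ 2 - Real.cosh u ^ 2 := by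
    have h2 : Real.cosh u ^ 2 < 2 := by
      have := Real.sq_sqrt (by norm_num : (2:ℝ) ≥ 0)
      nlinarith [Real.cosh_pos u, Real.sqrt_nonneg 2]
    linarith
  have hsq : Real.sqrt (2 - Real.cosh u ^ 2) ^ 2 = 2 - Real.cosh u ^ 2 :=
    Real.sq_sqrt hpos
  have hch : Real.cosh u ^ 2 - Real.sinh u ^ 2 = 1 := Real.cosh_sq_sub_sinh_sq u
  have hcv : Real.cosh v ^ 2 - Real.sinh v ^ 2 = 1 := Real.cosh_sq_sub_sinh_sq v
  refine ⟨?_, ?_, ?_⟩ <;> simp only [formR32] <;> nlinarith [hsq, hch, hcv]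
end

section
/- Let D = (−π/2, π/2) × ℝ, and define x : D → ℝ³ by x(τ,ϑ) = (F(τ), cos τ · cos ϑ, cos τ · sin ϑ) where F(τ) = ∫₀^τ √(1 + sin² t) dt. Then for all (τ,ϑ) ∈ D the partial derivatives satisfy B(∂_τ x, ∂_τ x) = 1, B(∂_τ x, ∂_ϑ x) = 0, and B(∂_ϑ x, ∂_ϑ x) = −cos² τ, where B is the index-2 bilinear form B(x,y) = x₁y₁ − x₂y₂ − x₃y₃ on ℝ³. Thus x is an isometric immersion into ℝ³₂ of the constant curvature K = 1 metric ds² = dτ² − cos²τ dϑ². -/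
/-- The index-2 bilinear form `B(x,y) = x₁y₁ − x₂y₂ − x₃y₃` on `ℝ³`. -/
def formR32' (x y : ℝ × ℝ × ℝ) : ℝ :=
  x.1 * y.1 - x.2.1 * y.2.1 - x.2.2 * y.2.2

/-- The parametrization `x(τ,ϑ) = (∫₀^τ √(1 + sin²t) dt, cos τ cos ϑ, cos τ sin ϑ)`. -/
noncomputable def xKoneR32time : ℝ × ℝ → ℝ × ℝ × ℝ := fun p =>
  (∫ t in (0 : ℝ)..p.1, Real.sqrt (1 + Real.sin t ^ 2),
    Real.cos p.1 * Real.cos p.2, Real.cos p.1 * Real.sin p.2)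

lemma cont_integrand : Continuous fun t : ℝ => Real.sqrt (1 + Real.sin t ^ 2) := by
  continuity

lemma deriv_tau (τ ϑ : ℝ) :
    deriv (fun t => xKoneR32time (t, ϑ)) τ =
      (Real.sqrt (1 + Real.sin τ ^ 2), -Real.sin τ * Real.cos ϑ,
        -Real.sin τ * Real.sin ϑ) := by
  have h1 : HasDerivAt (fun t : ℝ => ∫ s in (0:ℝ)..t, Real.sqrt (1 + Real.sin s ^ 2))
      (Real.sqrt (1 + Real.sin τ ^ 2)) τ := by
    exact intervalIntegral.integral_hasDerivAt_right
      (cont_integrand.intervalIntegrable _ _)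
      cont_integrand.aestronglyMeasurable.stronglyMeasurableAtFilter
      cont_integrand.continuousAt
  have h2 : HasDerivAt (fun t : ℝ => Real.cos t * Real.cos ϑ)
      (-Real.sin τ * Real.cos ϑ) τ := (Real.hasDerivAt_cos τ).mul_const _
  have h3 : HasDerivAt (fun t : ℝ => Real.cos t * Real.sin ϑ)
      (-Real.sin τ * Real.sin ϑ) τ := (Real.hasDerivAt_cos τ).mul_const _
  exact (h1.prodMk (h2.prodMk h3)).deriv

lemma deriv_theta (τ ϑ : ℝ) :
    deriv (fun t => xKoneR32time (τ, t)) ϑ =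
      (0, Real.cos τ * -Real.sin ϑ, Real.cos τ * Real.cos ϑ) := by
  have h1 : HasDerivAt (fun _ : ℝ => ∫ s in (0:ℝ)..τ, Real.sqrt (1 + Real.sin s ^ 2))
      0 ϑ := hasDerivAt_const _ _
  have h2 : HasDerivAt (fun t : ℝ => Real.cos τ * Real.cos t)
      (Real.cos τ * -Real.sin ϑ) ϑ := (Real.hasDerivAt_cos ϑ).const_mul _
  have h3 : HasDerivAt (fun t : ℝ => Real.cos τ * Real.sin t)
      (Real.cos τ * Real.cos ϑ) ϑ := (Real.hasDerivAt_sin ϑ).const_mul _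
  exact (h1.prodMk (h2.prodMk h3)).deriv

/-- On `D = (−π/2, π/2) × ℝ` the map `xKoneR32time` is an isometric immersion
into `ℝ³₂` of the metric `ds² = dτ² − cos²τ dϑ²` (K = 1). -/
theorem Kone_immersion_R32_timelike (τ ϑ : ℝ)
    (hτ₁ : -(Real.pi / 2) < τ) (hτ₂ : τ < Real.pi / 2) :
    formR32' (deriv (fun t => xKoneR32time (t, ϑ)) τ)
        (deriv (fun t => xKoneR32time (t, ϑ)) τ) = 1 ∧
    formR32' (deriv (fun t => xKoneR32time (t, ϑ)) τ)
        (deriv (fun t => xKoneR32time (τ, t)) ϑ) = 0 ∧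
    formR32' (deriv (fun t => xKoneR32time (τ, t)) ϑ)
        (deriv (fun t => xKoneR32time (τ, t)) ϑ) = -Real.cos τ ^ 2 := by
  rw [deriv_tau, deriv_theta]
  have hs : Real.sqrt (1 + Real.sin τ ^ 2) * Real.sqrt (1 + Real.sin τ ^ 2)
      = 1 + Real.sin τ ^ 2 := Real.mul_self_sqrt (by positivity)
  have hθ : Real.sin ϑ ^ 2 + Real.cos ϑ ^ 2 = 1 := Real.sin_sq_add_cos_sq ϑ
  refine ⟨?_, ?_, ?_⟩ <;> simp only [formR32'] <;> nlinarith [hs, hθ]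
end

section
/- Let D = (−π/2, π/2) × ℝ, and define x : D → ℝ³ by x(u,v) = (cos u · cos v, cos u · sin v, F(u)) where F(u) = ∫₀ᵘ √(1 + sin² t) dt. Then for all (u,v) ∈ D the partial derivatives satisfy ⟨∂_u x, ∂_u x⟩₁ = −1, ⟨∂_u x, ∂_v x⟩₁ = 0, and ⟨∂_v x, ∂_v x⟩₁ = cos² u. Thus x is an isometric immersion into 𝕃³ of the constant curvature K = −1 metric ds² = −du² + cos²u dv². -/
/-- The Minkowski bilinear form of index 1 on `ℝ³`: `⟨x,y⟩₁ = x₁y₁ + x₂y₂ − x₃y₃`. -/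
def minkowskiForm (x y : ℝ × ℝ × ℝ) : ℝ :=
  x.1 * y.1 + x.2.1 * y.2.1 - x.2.2 * y.2.2

/-- The parametrization `x(u,v) = (cos u cos v, cos u sin v, ∫₀ᵘ √(1 + sin²t) dt)`. -/
noncomputable def xKnegL3 : ℝ × ℝ → ℝ × ℝ × ℝ := fun p =>
  (Real.cos p.1 * Real.cos p.2, Real.cos p.1 * Real.sin p.2,
    ∫ t in (0 : ℝ)..p.1, Real.sqrt (1 + Real.sin t ^ 2))

lemma xu_deriv (u v : ℝ) :
    deriv (fun t => xKnegL3 (t, v)) u =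
      (-Real.sin u * Real.cos v, -Real.sin u * Real.sin v,
        Real.sqrt (1 + Real.sin u ^ 2)) := by
  have hcont : Continuous fun t => Real.sqrt (1 + Real.sin t ^ 2) := by
    fun_prop
  have h1 : HasDerivAt (fun t => Real.cos t * Real.cos v)
      (-Real.sin u * Real.cos v) u := (Real.hasDerivAt_cos u).mul_const _
  have h2 : HasDerivAt (fun t => Real.cos t * Real.sin v)
      (-Real.sin u * Real.sin v) u := (Real.hasDerivAt_cos u).mul_const _
  have h3 : HasDerivAt (fun t => ∫ s in (0:ℝ)..t, Real.sqrt (1 + Real.sin s ^ 2))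
      (Real.sqrt (1 + Real.sin u ^ 2)) u :=
    (hcont.integral_hasStrictDerivAt 0 u).hasDerivAt
  exact HasDerivAt.deriv (HasDerivAt.prodMk h1 (HasDerivAt.prodMk h2 h3))

lemma xv_deriv (u v : ℝ) :
    deriv (fun t => xKnegL3 (u, t)) v =
      (Real.cos u * -Real.sin v, Real.cos u * Real.cos v, 0) := by
  have h1 : HasDerivAt (fun t => Real.cos u * Real.cos t)
      (Real.cos u * -Real.sin v) v := (Real.hasDerivAt_cos v).const_mul _
  have h2 : HasDerivAt (fun t => Real.cos u * Real.sin t)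
      (Real.cos u * Real.cos v) v := (Real.hasDerivAt_sin v).const_mul _
  have h3 : HasDerivAt (fun _ : ℝ => ∫ s in (0:ℝ)..u, Real.sqrt (1 + Real.sin s ^ 2))
      (0 : ℝ) v := hasDerivAt_const _ _
  exact HasDerivAt.deriv (HasDerivAt.prodMk h1 (HasDerivAt.prodMk h2 h3))

/-- On `D = (−π/2, π/2) × ℝ` the map `xKnegL3` is an isometric immersion into `𝕃³`
of the metric `ds² = −du² + cos²u dv²` (K = −1). -/
theorem Kneg_immersion_L3_spacelike (u v : ℝ)
    (hu₁ : -(Real.pi / 2) < u) (hu₂ : u < Real.pi / 2) :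
    minkowskiForm (deriv (fun t => xKnegL3 (t, v)) u)
        (deriv (fun t => xKnegL3 (t, v)) u) = -1 ∧
    minkowskiForm (deriv (fun t => xKnegL3 (t, v)) u)
        (deriv (fun t => xKnegL3 (u, t)) v) = 0 ∧
    minkowskiForm (deriv (fun t => xKnegL3 (u, t)) v)
        (deriv (fun t => xKnegL3 (u, t)) v) = Real.cos u ^ 2 := by
  rw [xu_deriv, xv_deriv]
  have hsq : Real.sqrt (1 + Real.sin u ^ 2) ^ 2 = 1 + Real.sin u ^ 2 :=
    Real.sq_sqrt (by positivity)
  have hpyth := Real.sin_sq_add_cos_sq u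
  have hpyth' := Real.sin_sq_add_cos_sq v
  refine ⟨?_, ?_, ?_⟩ <;> simp only [minkowskiForm] <;> nlinarith [hsq, hpyth, hpyth']
end
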